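/- Let ψ be the strictly increasing positive fundamental solution of (σ²/2)u'' + κ(μ−x)u' − ρu = 0. Then for every k ∈ ℕ₀, the k-th derivative ψ^{(k)} is strictly positive, strictly increasing, strictly convex, and satisfies (σ²/2)(ψ^{(k)})'' + κ(μ−x)(ψ^{(k)})' − (ρ+kκ)ψ^{(k)} = 0 for all x ∈ ℝ. -/

import Mathlib

open MeasureTheory Real Filter


open Set

/-- Parabolic cylinder function `D_α(x)` for `α < 0` (integral representation). -/
noncomputable def Dcyl (α x : ℝ) : ℝ :=
  Real.exp (-x ^ 2 / 4) / Real.Gamma (-α) *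
    ∫ t in Ioi (0 : ℝ), t ^ (-α - 1) * Real.exp (-t ^ 2 / 2 - x * t)

/-- Increasing fundamental solution of `(σ²/2)u'' + κ(μ−x)u' − ρu = 0`. -/
noncomputable def psi (κ μ σ ρ : ℝ) (x : ℝ) : ℝ :=
  Real.exp (κ * (x - μ) ^ 2 / (2 * σ ^ 2)) *
    Dcyl (-(ρ / κ)) (-((x - μ) / σ) * Real.sqrt (2 * κ))

/-- Decreasing fundamental solution of `(σ²/2)u'' + κ(μ−x)u' − ρu = 0`. -/
noncomputable def phi (κ μ σ ρ : ℝ) (x : ℝ) : ℝ :=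
  Real.exp (κ * (x - μ) ^ 2 / (2 * σ ^ 2)) *
    Dcyl (-(ρ / κ)) (((x - μ) / σ) * Real.sqrt (2 * κ))

lemma cont_aux (p s : ℝ) : ContinuousOn (fun t : ℝ => t ^ p * Real.exp (-t^2/2 + s*t)) (Ioi 0) := by
  apply ContinuousOn.mul
  · exact ContinuousOn.rpow_const continuousOn_id (fun t ht => Or.inl (ne_of_gt ht))
  · exact (Real.continuous_exp.comp (by continuity)).continuousOn

lemma integrable_aux {p : ℝ} (hp : -1 < p) (s : ℝ) :
    IntegrableOn (fun t : ℝ => t ^ p * Real.exp (-t^2/2 + s*t)) (Ioi 0) := by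
  have hG0 := Real.GammaIntegral_convergent (show (0:ℝ) < p + 1 by linarith)
  have hG' : IntegrableOn (fun t : ℝ => Real.exp ((s+1)^2/2) * (Real.exp (-t) * t ^ p)) (Ioi 0) := by
    have := hG0.const_mul (Real.exp ((s+1)^2/2))
    simp at this
    exact this
  refine Integrable.mono' hG' ((cont_aux p s).aestronglyMeasurable measurableSet_Ioi) ?_
  filter_upwards [ae_restrict_mem measurableSet_Ioi] with t ht
  have ht0 : (0:ℝ) < t := ht
  have h1 : (0:ℝ) ≤ t ^ p := Real.rpow_nonneg ht0.le p
  rw [Real.norm_eq_abs, abs_of_nonneg (mul_nonneg h1 (Real.exp_nonneg _))]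
  have h2 : Real.exp (-t^2/2 + s*t) ≤ Real.exp ((s+1)^2/2) * Real.exp (-t) := by
    rw [← Real.exp_add]
    apply Real.exp_le_exp.2
    nlinarith [sq_nonneg (t - (s+1))]
  calc t ^ p * Real.exp (-t^2/2 + s*t) ≤ t ^ p * (Real.exp ((s+1)^2/2) * Real.exp (-t)) :=
        mul_le_mul_of_nonneg_left h2 h1
    _ = Real.exp ((s+1)^2/2) * (Real.exp (-t) * t ^ p) := by ring

noncomputable def Gr (p s : ℝ) : ℝ := ∫ t in Ioi (0:ℝ), t ^ p * Real.exp (-t^2/2 + s*t)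

lemma Gr_pos {p : ℝ} (hp : -1 < p) (s : ℝ) : 0 < Gr p s := by
  rw [Gr, setIntegral_pos_iff_support_of_nonneg_ae]
  · have hs : Function.support (fun t : ℝ => t ^ p * Real.exp (-t^2/2 + s*t)) ∩ Ioi 0 = Ioi 0 := by
      apply inter_eq_right.2
      intro t ht
      exact ne_of_gt (mul_pos (Real.rpow_pos_of_pos ht p) (Real.exp_pos _))
    rw [hs]
    simp
  · filter_upwards [ae_restrict_mem measurableSet_Ioi] with t ht
    exact le_of_lt (mul_pos (Real.rpow_pos_of_pos ht p) (Real.exp_pos _))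
  · exact integrable_aux hp s

lemma hasDerivAt_Gr {p : ℝ} (hp : -1 < p) (s : ℝ) :
    HasDerivAt (fun u => Gr p u) (Gr (p+1) s) s := by
  have key := hasDerivAt_integral_of_dominated_loc_of_deriv_le
    (μ := volume.restrict (Ioi (0:ℝ)))
    (F := fun u t => t ^ p * Real.exp (-t^2/2 + u*t))
    (F' := fun u t => t ^ (p+1) * Real.exp (-t^2/2 + u*t))
    (bound := fun t => t ^ (p+1) * Real.exp (-t^2/2 + (s+1)*t))
    (x₀ := s) (Metric.ball_mem_nhds s zero_lt_one)
    (Eventually.of_forall fun u => ((cont_aux p u).aestronglyMeasurable measurableSet_Ioi))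
    (integrable_aux hp s)
    ((cont_aux (p+1) s).aestronglyMeasurable measurableSet_Ioi)
    ?_ (integrable_aux (by linarith) (s+1)) ?_
  · exact key.2
  · filter_upwards [ae_restrict_mem measurableSet_Ioi] with t ht u hu
    have ht0 : (0:ℝ) < t := ht
    have h1 : (0:ℝ) ≤ t ^ (p+1) := Real.rpow_nonneg ht0.le _
    rw [Real.norm_eq_abs, abs_of_nonneg (mul_nonneg h1 (Real.exp_nonneg _))]
    apply mul_le_mul_of_nonneg_left _ h1
    apply Real.exp_le_exp.2
    have : u ≤ s + 1 := by
      have := abs_lt.1 (mem_ball_iff_norm.1 hu)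
      linarith [this.2]
    nlinarith
  · filter_upwards [ae_restrict_mem measurableSet_Ioi] with t ht u hu
    have ht0 : (0:ℝ) < t := ht
    have h := ((hasDerivAt_id u).mul_const t).const_add (-t^2/2)
    have h2 := (h.exp).const_mul (t ^ p)
    simp only [id] at h2
    have h2' : HasDerivAt (_ : ℝ → ℝ) (_ : ℝ) u := h2
    show HasDerivAt (_ : ℝ → ℝ) (_ : ℝ) u
    convert h2' using 1
    rw [Real.rpow_add_one (ne_of_gt ht0)]
    ring

lemma exp_deriv_aux (s t : ℝ) :
    HasDerivAt (fun t : ℝ => Real.exp (-t^2/2 + s*t)) ((s - t) * Real.exp (-t^2/2 + s*t)) t := by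
  have hi : HasDerivAt (fun t : ℝ => -t^2/2 + s*t) (s - t) t := by
    have h1 := ((hasDerivAt_pow 2 t).div_const 2).neg
    have h2 := (hasDerivAt_id t).const_mul s
    have := h1.add h2
    have this' : HasDerivAt (_ : ℝ → ℝ) (_ : ℝ) t := this
    convert this' using 1
    · funext y; simp only [id, Pi.add_apply, Pi.neg_apply]; ring
    · push_cast; ring
  have := hi.exp
  rw [mul_comm] at this
  exact this

lemma tendsto_aux (q s : ℝ) :
    Tendsto (fun t : ℝ => t ^ q * Real.exp (-t^2/2 + s*t)) atTop (nhds 0) := by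
  have hlim : Tendsto (fun t : ℝ => Real.exp ((s+1)^2/2) * (t ^ q * Real.exp (-(1:ℝ) * t))) atTop (nhds 0) := by
    have := tendsto_rpow_mul_exp_neg_mul_atTop_nhds_zero q 1 one_pos
    simpa using this.const_mul (Real.exp ((s+1)^2/2))
  apply tendsto_of_tendsto_of_tendsto_of_le_of_le' tendsto_const_nhds hlim
  · filter_upwards [eventually_gt_atTop (0:ℝ)] with t ht
    exact le_of_lt (mul_pos (Real.rpow_pos_of_pos ht q) (Real.exp_pos _))
  · filter_upwards [eventually_gt_atTop (0:ℝ)] with t ht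
    have h1 : (0:ℝ) ≤ t ^ q := Real.rpow_nonneg ht.le q
    have h2 : Real.exp (-t^2/2 + s*t) ≤ Real.exp ((s+1)^2/2) * Real.exp (-(1:ℝ)*t) := by
      rw [← Real.exp_add]
      apply Real.exp_le_exp.2
      nlinarith [sq_nonneg (t - (s+1))]
    calc t ^ q * Real.exp (-t^2/2 + s*t) ≤ t ^ q * (Real.exp ((s+1)^2/2) * Real.exp (-(1:ℝ)*t)) :=
          mul_le_mul_of_nonneg_left h2 h1
      _ = Real.exp ((s+1)^2/2) * (t ^ q * Real.exp (-(1:ℝ)*t)) := by ring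

lemma Gr_rec {q : ℝ} (hq : 0 < q) (s : ℝ) :
    Gr (q+1) s = s * Gr q s + q * Gr (q-1) s := by
  set E : ℝ → ℝ := fun t => Real.exp (-t^2/2 + s*t) with hE
  have hd : ∀ t ∈ Ioi (0:ℝ), HasDerivAt (fun t => t ^ q * E t)
      (q * (t ^ (q-1) * E t) + s * (t ^ q * E t) - t ^ (q+1) * E t) t := by
    intro t ht
    have ht0 : (0:ℝ) < t := ht
    have h1 : HasDerivAt (fun t : ℝ => t ^ q) (q * t ^ (q-1)) t :=
      Real.hasDerivAt_rpow_const (Or.inl (ne_of_gt ht0))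
    have h2 := h1.mul (exp_deriv_aux s t)
    have h2' : HasDerivAt (_ : ℝ → ℝ) (_ : ℝ) t := h2
    convert h2' using 1
    · rfl
    rw [hE]
    have : t ^ (q+1) = t ^ q * t := Real.rpow_add_one (ne_of_gt ht0) q
    rw [this]
    ring
  have hint : IntegrableOn (fun t : ℝ =>
      q * (t ^ (q-1) * E t) + s * (t ^ q * E t) - t ^ (q+1) * E t) (Ioi 0) := by
    apply Integrable.sub
    · exact ((integrable_aux (by linarith) s).const_mul q).add ((integrable_aux (by linarith) s).const_mul s)
    · exact integrable_aux (by linarith) s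
  have hcont : ContinuousWithinAt (fun t : ℝ => t ^ q * E t) (Ici 0) 0 := by
    apply ContinuousAt.continuousWithinAt
    apply ContinuousAt.mul
    · exact Real.continuousAt_rpow_const 0 q (Or.inr hq.le)
    · exact (Real.continuous_exp.comp (by continuity)).continuousAt
  have key := integral_Ioi_of_hasDerivAt_of_tendsto hcont hd hint (tendsto_aux q s)
  rw [Real.zero_rpow (ne_of_gt hq), zero_mul, sub_zero] at key
  have hsplit : ∫ t in Ioi (0:ℝ), (q * (t ^ (q-1) * E t) + s * (t ^ q * E t) - t ^ (q+1) * E t)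
      = q * Gr (q-1) s + s * Gr q s - Gr (q+1) s := by
    rw [integral_sub, integral_add]
    · rw [MeasureTheory.integral_const_mul, MeasureTheory.integral_const_mul]
      rfl
    · exact (integrable_aux (by linarith) s).const_mul q
    · exact (integrable_aux (by linarith) s).const_mul s
    · exact ((integrable_aux (by linarith) s).const_mul q).add ((integrable_aux (by linarith) s).const_mul s)
    · exact integrable_aux (by linarith) s
  rw [hsplit] at key
  linarith

lemma hasDerivAt_G {a : ℝ} {p : ℝ} (hp : -1 < p) (μ x : ℝ) :
    HasDerivAt (fun x => Gr p (a*(x-μ))) (a * Gr (p+1) (a*(x-μ))) x := by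
  have hu : HasDerivAt (fun x : ℝ => a*(x-μ)) a x := by
    simpa using ((hasDerivAt_id x).sub_const μ).const_mul a
  have h := (hasDerivAt_Gr hp (a*(x-μ))).comp x hu
  have h' : HasDerivAt (fun x => Gr p (a*(x-μ))) (Gr (p+1) (a*(x-μ)) * a) x := h
  convert h' using 1
  ring

lemma psi_eq {κ σ : ℝ} (hκ : 0 < κ) (hσ : 0 < σ) (ρ μ x : ℝ) :
    psi κ μ σ ρ x = (Real.Gamma (ρ/κ))⁻¹ * Gr (ρ/κ + (0:ℕ) - 1) (Real.sqrt (2*κ)/σ * (x - μ)) := by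
  unfold psi Dcyl
  rw [neg_neg]
  have hsq : Real.sqrt (2*κ)^2 = 2*κ := Real.sq_sqrt (by linarith)
  have hI : (∫ t in Ioi (0:ℝ), t ^ (ρ/κ - 1) * Real.exp (-t^2/2 - (-((x-μ)/σ)*Real.sqrt (2*κ))*t))
      = Gr (ρ/κ + (0:ℕ) - 1) (Real.sqrt (2*κ)/σ * (x - μ)) := by
    rw [Gr]
    apply setIntegral_congr_fun measurableSet_Ioi
    intro t _
    have he : ρ/κ - 1 = ρ/κ + (0:ℕ) - 1 := by push_cast; ring
    rw [he]
    ring_nf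
  rw [hI]
  have h1 : Real.exp (κ*(x-μ)^2/(2*σ^2)) * Real.exp (-(-((x-μ)/σ)*Real.sqrt (2*κ))^2/4) = 1 := by
    rw [← Real.exp_add, ← Real.exp_zero]
    congr 1
    have h2 : (-((x-μ)/σ)*Real.sqrt (2*κ))^2 = (x-μ)^2/σ^2 * (2*κ) := by
      rw [mul_pow]
      rw [hsq]
      ring
    rw [h2]
    field_simp
    ring
  calc Real.exp (κ*(x-μ)^2/(2*σ^2)) *
        (Real.exp (-(-((x-μ)/σ)*Real.sqrt (2*κ))^2/4) / Real.Gamma (ρ/κ) *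
          Gr (ρ/κ + (0:ℕ) - 1) (Real.sqrt (2*κ)/σ * (x - μ)))
      = (Real.exp (κ*(x-μ)^2/(2*σ^2)) * Real.exp (-(-((x-μ)/σ)*Real.sqrt (2*κ))^2/4)) *
          ((Real.Gamma (ρ/κ))⁻¹ * Gr (ρ/κ + (0:ℕ) - 1) (Real.sqrt (2*κ)/σ * (x - μ))) := by
        ring
    _ = _ := by rw [h1, one_mul]

lemma psi_rep {κ σ ρ : ℝ} (hκ : 0 < κ) (hσ : 0 < σ) (hρ : 0 < ρ) (μ : ℝ) (k : ℕ) :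
    iteratedDeriv k (psi κ μ σ ρ) = fun x =>
      (Real.Gamma (ρ/κ))⁻¹ * (Real.sqrt (2*κ)/σ)^k * Gr (ρ/κ + k - 1) (Real.sqrt (2*κ)/σ * (x - μ)) := by
  set a := Real.sqrt (2*κ)/σ with ha
  set β := ρ/κ with hβ
  have hβ0 : 0 < β := div_pos hρ hκ
  induction k with
  | zero =>
    rw [iteratedDeriv_zero]
    funext x
    rw [psi_eq hκ hσ ρ μ x]
    simp only [← ha, ← hβ, pow_zero, mul_one, Nat.cast_zero]
  | succ k ih =>
    rw [iteratedDeriv_succ, ih]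
    funext x
    have hp : -1 < β + (k:ℝ) - 1 := by
      have : (0:ℝ) ≤ (k:ℝ) := Nat.cast_nonneg k
      linarith
    have hd := ((hasDerivAt_G (a := a) hp μ x).const_mul ((Real.Gamma β)⁻¹ * a^k))
    rw [hd.deriv]
    have he : β + (k:ℝ) - 1 + 1 = β + ((k:ℕ)+1:ℝ) - 1 := by ring
    rw [he]
    push_cast
    ring

/-- Every derivative `ψ^{(k)}` is strictly positive, strictly increasing, strictly convex,
and solves `(σ²/2)(ψ^{(k)})'' + κ(μ−x)(ψ^{(k)})' − (ρ+kκ)ψ^{(k)} = 0`. -/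
theorem stmt7 (κ σ ρ μ : ℝ) (hκ : 0 < κ) (hσ : 0 < σ) (hρ : 0 < ρ) :
    ∀ k : ℕ,
      (∀ x : ℝ, 0 < iteratedDeriv k (psi κ μ σ ρ) x) ∧
        StrictMono (iteratedDeriv k (psi κ μ σ ρ)) ∧
        StrictConvexOn ℝ Set.univ (iteratedDeriv k (psi κ μ σ ρ)) ∧
        ∀ x : ℝ,
          σ ^ 2 / 2 * iteratedDeriv (k + 2) (psi κ μ σ ρ) x
            + κ * (μ - x) * iteratedDeriv (k + 1) (psi κ μ σ ρ) x
            - (ρ + k * κ) * iteratedDeriv k (psi κ μ σ ρ) x = 0 := by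
  have ha0 : 0 < Real.sqrt (2*κ)/σ := div_pos (Real.sqrt_pos.2 (by linarith)) hσ
  have hβ0 : 0 < ρ/κ := div_pos hρ hκ
  have hc : 0 < (Real.Gamma (ρ/κ))⁻¹ := inv_pos.2 (Real.Gamma_pos_of_pos hβ0)
  have hp : ∀ m : ℕ, -1 < ρ/κ + (m:ℝ) - 1 := by
    intro m
    have : (0:ℝ) ≤ (m:ℝ) := Nat.cast_nonneg m
    linarith
  have pos : ∀ m : ℕ, ∀ x : ℝ, 0 < iteratedDeriv m (psi κ μ σ ρ) x := by
    intro m x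
    rw [psi_rep hκ hσ hρ μ m]
    exact mul_pos (mul_pos hc (pow_pos ha0 m)) (Gr_pos (hp m) _)
  have hder : ∀ m : ℕ, ∀ x : ℝ, HasDerivAt (iteratedDeriv m (psi κ μ σ ρ))
      (iteratedDeriv (m+1) (psi κ μ σ ρ) x) x := by
    intro m x
    rw [psi_rep hκ hσ hρ μ m, psi_rep hκ hσ hρ μ (m+1)]
    have hd := ((hasDerivAt_G (a := Real.sqrt (2*κ)/σ) (hp m) μ x).const_mul
      ((Real.Gamma (ρ/κ))⁻¹ * (Real.sqrt (2*κ)/σ)^m))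
    have hd' : HasDerivAt (_ : ℝ → ℝ) (_ : ℝ) x := hd
    convert hd' using 1
    have he : ρ/κ + ((m:ℕ)+1:ℕ) - 1 = ρ/κ + (m:ℝ) - 1 + 1 := by push_cast; ring
    rw [he]
    ring
  have hderiv_eq : ∀ m : ℕ, ∀ x : ℝ, deriv (iteratedDeriv m (psi κ μ σ ρ)) x
      = iteratedDeriv (m+1) (psi κ μ σ ρ) x := fun m x => (hder m x).deriv
  intro k
  refine ⟨pos k, ?_, ?_, ?_⟩
  · apply strictMono_of_deriv_pos
    intro x
    rw [hderiv_eq k x]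
    exact pos (k+1) x
  · apply strictConvexOn_univ_of_deriv2_pos
    · exact Differentiable.continuous (fun x => (hder k x).differentiableAt)
    · intro x
      rw [Function.iterate_succ_apply', Function.iterate_one]
      have h1 : deriv (iteratedDeriv k (psi κ μ σ ρ)) = iteratedDeriv (k+1) (psi κ μ σ ρ) :=
        funext (hderiv_eq k)
      rw [h1, hderiv_eq (k+1) x]
      exact pos (k+2) x
  · intro x
    rw [psi_rep hκ hσ hρ μ k, psi_rep hκ hσ hρ μ (k+1), psi_rep hκ hσ hρ μ (k+2)]
    simp only []
    have e2 : ρ/κ + ((k:ℕ)+2:ℕ) - 1 = (ρ/κ + (k:ℝ)) + 1 := by push_cast; ring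
    have e1 : ρ/κ + ((k:ℕ)+1:ℕ) - 1 = ρ/κ + (k:ℝ) := by push_cast; ring
    rw [e2, e1]
    rw [Gr_rec (show (0:ℝ) < ρ/κ + (k:ℝ) by positivity) (Real.sqrt (2*κ)/σ * (x - μ))]
    have hK : σ^2/2 * (Real.sqrt (2*κ)/σ)^2 = κ := by
      rw [div_pow, Real.sq_sqrt (by linarith : (0:ℝ) ≤ 2*κ)]
      field_simp
    have hQ : ρ + (k:ℝ)*κ = κ*(ρ/κ + (k:ℝ)) := by
      field_simp
    rw [hQ]
    linear_combination ((Real.Gamma (ρ/κ))⁻¹ * (Real.sqrt (2*κ)/σ)^k *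
      ((Real.sqrt (2*κ)/σ*(x-μ)) * Gr (ρ/κ + (k:ℝ)) (Real.sqrt (2*κ)/σ*(x-μ))
        + (ρ/κ + (k:ℝ)) * Gr (ρ/κ + (k:ℝ) - 1) (Real.sqrt (2*κ)/σ*(x-μ)))) * hK
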